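/- Let Δₙ₊₁ be defined from Δₙ via the recursion Δₙ₊₁(x, ξ) = ∫ 1_{ξf₁(u) ≥ (1-ξ)f₂(u)}·Δₙ(x+u, p_X(ξ,u))·m_ξ(u) du + ∫ 1_{ξf₂(u) < (1-ξ)f₁(u)}·Δₙ(x+u, p_Y(ξ,u))·m'_ξ(u) du, with p_X, p_Y, m_ξ, m'_ξ the posterior and marginal formulas. If Δₙ satisfies Δₙ(y, η) = -Δₙ(y, 1-η) for all y, η, then Δₙ₊₁(x, ξ) = -Δₙ₊₁(x, 1-ξ) for all x, ξ. -/

import Mathlib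

open MeasureTheory

/-- The antisymmetry `Δₙ(y,η) = -Δₙ(y,1-η)` propagates through the recursion
defining `Δₙ₊₁` from `Δₙ` via the posterior and marginal formulas. -/
theorem delta_antisymmetry_propagates (f₁ f₂ : ℝ → ℝ)
    (hf₁ : ∀ u, 0 ≤ f₁ u) (hf₂ : ∀ u, 0 ≤ f₂ u)
    (hden : ∀ ξ ∈ Set.Icc (0 : ℝ) 1, ∀ u : ℝ,
      0 < ξ * f₁ u + (1 - ξ) * f₂ u ∧ 0 < ξ * f₂ u + (1 - ξ) * f₁ u)
    (Δn Δn1 : ℝ → ℝ → ℝ)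
    (hrec : ∀ (x : ℝ), ∀ ξ ∈ Set.Icc (0 : ℝ) 1,
      Δn1 x ξ =
        (∫ u, (if (1 - ξ) * f₂ u ≤ ξ * f₁ u then
            Δn (x + u) (ξ * f₁ u / (ξ * f₁ u + (1 - ξ) * f₂ u)) *
              (ξ * f₁ u + (1 - ξ) * f₂ u) else 0)) +
        ∫ u, (if ξ * f₂ u < (1 - ξ) * f₁ u then
            Δn (x + u) (ξ * f₂ u / (ξ * f₂ u + (1 - ξ) * f₁ u)) *
              (ξ * f₂ u + (1 - ξ) * f₁ u) else 0))
    (hanti : ∀ (y : ℝ), ∀ η ∈ Set.Icc (0 : ℝ) 1, Δn y η = -Δn y (1 - η)) :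
    ∀ (x : ℝ), ∀ ξ ∈ Set.Icc (0 : ℝ) 1, Δn1 x ξ = -Δn1 x (1 - ξ) := by
  intro x ξ hξ
  obtain ⟨h0, h1⟩ := Set.mem_Icc.mp hξ
  have hξ' : (1 - ξ) ∈ Set.Icc (0 : ℝ) 1 := Set.mem_Icc.mpr ⟨by linarith, by linarith⟩
  have half : ∀ y : ℝ, Δn y (1/2) = 0 := by
    intro y
    have h := hanti y (1/2) (by norm_num)
    norm_num at h
    linarith
  rw [hrec x ξ hξ, hrec x (1 - ξ) hξ']
  have e1 : ∀ u, (if (1 - ξ) * f₂ u ≤ ξ * f₁ u then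
        Δn (x + u) (ξ * f₁ u / (ξ * f₁ u + (1 - ξ) * f₂ u)) *
          (ξ * f₁ u + (1 - ξ) * f₂ u) else 0)
      = -(if (1 - ξ) * f₂ u < (1 - (1 - ξ)) * f₁ u then
        Δn (x + u) ((1 - ξ) * f₂ u / ((1 - ξ) * f₂ u + (1 - (1 - ξ)) * f₁ u)) *
          ((1 - ξ) * f₂ u + (1 - (1 - ξ)) * f₁ u) else 0) := by
    intro u
    simp only [sub_sub_cancel]
    have hD := (hden ξ hξ u).1
    have hcomm : (1 - ξ) * f₂ u + ξ * f₁ u = ξ * f₁ u + (1 - ξ) * f₂ u := by ring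
    rcases lt_trichotomy ((1 - ξ) * f₂ u) (ξ * f₁ u) with h | h | h
    · rw [if_pos h.le, if_pos h, hcomm]
      have hmem : ξ * f₁ u / (ξ * f₁ u + (1 - ξ) * f₂ u) ∈ Set.Icc (0 : ℝ) 1 := by
        constructor
        · exact div_nonneg (mul_nonneg h0 (hf₁ u)) hD.le
        · rw [div_le_one hD]
          nlinarith [mul_nonneg (by linarith : (0:ℝ) ≤ 1 - ξ) (hf₂ u)]
      rw [hanti (x + u) _ hmem]
      have : 1 - ξ * f₁ u / (ξ * f₁ u + (1 - ξ) * f₂ u)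
          = (1 - ξ) * f₂ u / (ξ * f₁ u + (1 - ξ) * f₂ u) := by
        field_simp
        ring
      rw [this]; ring
    · rw [if_pos h.le, if_neg (by rw [h]; exact lt_irrefl _)]
      have hpos : 0 < ξ * f₁ u + ξ * f₁ u := by linarith
      have : ξ * f₁ u / (ξ * f₁ u + (1 - ξ) * f₂ u) = 1 / 2 := by
        rw [h, div_eq_div_iff (ne_of_gt hpos) two_ne_zero]; ring
      rw [this, half]; simp
    · rw [if_neg (not_le.mpr h), if_neg (not_lt.mpr h.le)]; simp
  have e2 : ∀ u, (if ξ * f₂ u < (1 - ξ) * f₁ u then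
        Δn (x + u) (ξ * f₂ u / (ξ * f₂ u + (1 - ξ) * f₁ u)) *
          (ξ * f₂ u + (1 - ξ) * f₁ u) else 0)
      = -(if (1 - (1 - ξ)) * f₂ u ≤ (1 - ξ) * f₁ u then
        Δn (x + u) ((1 - ξ) * f₁ u / ((1 - ξ) * f₁ u + (1 - (1 - ξ)) * f₂ u)) *
          ((1 - ξ) * f₁ u + (1 - (1 - ξ)) * f₂ u) else 0) := by
    intro u
    simp only [sub_sub_cancel]
    have hE := (hden ξ hξ u).2
    have hcomm : (1 - ξ) * f₁ u + ξ * f₂ u = ξ * f₂ u + (1 - ξ) * f₁ u := by ring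
    rcases lt_trichotomy (ξ * f₂ u) ((1 - ξ) * f₁ u) with h | h | h
    · rw [if_pos h, if_pos h.le, hcomm]
      have hmem : (1 - ξ) * f₁ u / (ξ * f₂ u + (1 - ξ) * f₁ u) ∈ Set.Icc (0 : ℝ) 1 := by
        constructor
        · have := mul_nonneg (by linarith : (0:ℝ) ≤ 1 - ξ) (hf₁ u)
          positivity
        · rw [div_le_one hE]
          nlinarith [mul_nonneg h0 (hf₂ u)]
      rw [hanti (x + u) _ hmem]
      have : 1 - (1 - ξ) * f₁ u / (ξ * f₂ u + (1 - ξ) * f₁ u)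
          = ξ * f₂ u / (ξ * f₂ u + (1 - ξ) * f₁ u) := by
        field_simp
        ring
      rw [this]; ring
    · rw [if_neg (by rw [h]; exact lt_irrefl _), if_pos h.le, hcomm]
      have hpos : 0 < ξ * f₂ u + ξ * f₂ u := by linarith
      have : (1 - ξ) * f₁ u / (ξ * f₂ u + (1 - ξ) * f₁ u) = 1 / 2 := by
        rw [← h, div_eq_div_iff (ne_of_gt hpos) two_ne_zero]; ring
      rw [this, half]; simp
    · rw [if_neg (not_lt.mpr h.le), if_neg (not_le.mpr h)]; simp
  simp_rw [e1, e2, integral_neg]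
  ring
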